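/- Let a > 0 and σ_b² ≥ 0, and for β ∈ [0,1) define η_max(β) := 2a(1+β)(1−β) / ((1−β)a² + (1+β)σ_b²). Then: (i) if σ_b² = 0, the function β ↦ η_max(β) = 2(1+β)/a is strictly increasing on [0,1); (ii) if σ_b² > a², the function β ↦ η_max(β) is strictly decreasing on [0,1). Hence the monotonicity of the maximal stable step size in the momentum parameter reverses between the deterministic and noise-dominated regimes. -/
import Mathlib


/-- For `a > 0` and `σ_b² ≥ 0`, consider the maximal mean-square-stable step size
`η_max(β) = 2a(1+β)(1-β) / ((1-β)a² + (1+β)σ_b²)` as a function of the momentum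
`β ∈ [0,1)`. Then:
(i) if `σ_b² = 0`, the map `β ↦ η_max(β)` is strictly increasing on `[0,1)`;
(ii) if `σ_b² > a²`, the map `β ↦ η_max(β)` is strictly decreasing on `[0,1)`. -/
theorem eta_max_monotonicity_reversal
    (a σb2 : ℝ) (ha : 0 < a) (hσ : 0 ≤ σb2)
    (ηmax : ℝ → ℝ)
    (hηmax : ∀ β : ℝ,
      ηmax β = 2 * a * (1 + β) * (1 - β) / ((1 - β) * a ^ 2 + (1 + β) * σb2)) :
    (σb2 = 0 → StrictMonoOn ηmax (Set.Ico (0 : ℝ) 1)) ∧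
      (a ^ 2 < σb2 → StrictAntiOn ηmax (Set.Ico (0 : ℝ) 1)) := by
  constructor
  · intro hs x hx y hy hxy
    simp only [Set.mem_Ico] at hx hy
    rw [hηmax, hηmax, hs]
    have hdx : (0:ℝ) < (1 - x) * a ^ 2 + (1 + x) * 0 := by nlinarith [mul_pos (sub_pos.2 hx.2) (pow_pos ha 2)]
    have hdy : (0:ℝ) < (1 - y) * a ^ 2 + (1 + y) * 0 := by nlinarith [mul_pos (sub_pos.2 hy.2) (pow_pos ha 2)]
    rw [div_lt_div_iff₀ hdx hdy]
    nlinarith [mul_pos (sub_pos.2 hx.2) (sub_pos.2 hy.2), sq_nonneg a,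
      mul_pos ha (mul_pos (mul_pos (sub_pos.2 hx.2) (sub_pos.2 hy.2)) (sub_pos.2 hxy))]
  · intro hs x hx y hy hxy
    simp only [Set.mem_Ico] at hx hy
    rw [hηmax, hηmax]
    have hdx : (0:ℝ) < (1 - x) * a ^ 2 + (1 + x) * σb2 := by nlinarith [mul_pos (sub_pos.2 hx.2) (pow_pos ha 2), mul_nonneg (by linarith [hx.1] : (0:ℝ) ≤ 1 + x) hσ]
    have hdy : (0:ℝ) < (1 - y) * a ^ 2 + (1 + y) * σb2 := by nlinarith [mul_pos (sub_pos.2 hy.2) (pow_pos ha 2), mul_nonneg (by linarith [hy.1] : (0:ℝ) ≤ 1 + y) hσ]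
    rw [div_lt_div_iff₀ hdy hdx]
    have key : σb2 * ((1 + x) * (1 + y)) > a ^ 2 * ((1 - x) * (1 - y)) := by
      nlinarith [hx.1, hy.1, hx.2, hy.2, sq_nonneg a, mul_nonneg hx.1 hy.1]
    nlinarith [mul_pos ha (mul_pos (sub_pos.2 hxy) (sub_pos.2 key.lt))]
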